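/- arXiv:2301.00960 — 3 statements merged into one kernel-verified Lean document; each statement's English description precedes it below -/
import Mathlib

section
/- Pasting lemma: Let D ⊆ Ω be open subsets of ℝⁿ, let u be F-superharmonic in Ω and v be F-superharmonic in D. Define s = min{u, v} in D and s = u in Ω \ D. If s is lower semicontinuous on Ω, then s is F-superharmonic in Ω. -/
open Filter Topology Metric Set MeasureTheory Matrix

noncomputable section

abbrev Mat (n : ℕ) := Matrix (Fin n) (Fin n) ℝ
abbrev Euc (n : ℕ) := EuclideanSpace ℝ (Fin n)

variable {n : ℕ}

/-- The Hessian matrix of a function at a point, via the second iterated Fréchet derivative. -/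
def hessianMat (φ : Euc n → ℝ) (x : Euc n) : Mat n :=
  Matrix.of fun i j =>
    iteratedFDeriv ℝ 2 φ x ![EuclideanSpace.single i 1, EuclideanSpace.single j 1]

/-- Uniform ellipticity of `F` with constants `0 < lam ≤ Lam`, measured in the
Frobenius norm `√(tr (Nᵀ N))`. -/
def UniformlyElliptic (F : Mat n → ℝ) (lam Lam : ℝ) : Prop :=
  0 < lam ∧ lam ≤ Lam ∧ ∀ M N : Mat n, N.PosSemidef →
    lam * Real.sqrt (Matrix.trace (Nᵀ * N)) ≤ F (M + N) - F M ∧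
    F (M + N) - F M ≤ Lam * Real.sqrt (Matrix.trace (Nᵀ * N))

/-- `F` is positively homogeneous of degree one. -/
def PosHomOne (F : Mat n → ℝ) : Prop :=
  ∀ t : ℝ, 0 < t → ∀ M : Mat n, F (t • M) = t * F M

/-- Viscosity supersolution of `F(D²u)=0` on `Ω` (extended-real-valued `u`). -/
def ViscSupersol (F : Mat n → ℝ) (Ω : Set (Euc n)) (u : Euc n → EReal) : Prop :=
  ∀ x₀ ∈ Ω, ∀ φ : Euc n → ℝ, ContDiff ℝ 2 φ →
    (∀ᶠ y in 𝓝[Ω] x₀, u x₀ - (φ x₀ : EReal) ≤ u y - (φ y : EReal)) →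
    F (hessianMat φ x₀) ≤ 0

/-- Viscosity subsolution of `F(D²u)=0` on `Ω`. -/
def ViscSubsol (F : Mat n → ℝ) (Ω : Set (Euc n)) (u : Euc n → EReal) : Prop :=
  ∀ x₀ ∈ Ω, ∀ φ : Euc n → ℝ, ContDiff ℝ 2 φ →
    (∀ᶠ y in 𝓝[Ω] x₀, u y - (φ y : EReal) ≤ u x₀ - (φ x₀ : EReal)) →
    0 ≤ F (hessianMat φ x₀)

/-- `h` is `F`-harmonic on an open set `D` (a real-valued viscosity solution). -/
def IsFHarmonicOn (F : Mat n → ℝ) (D : Set (Euc n)) (h : Euc n → ℝ) : Prop :=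
  ViscSupersol F D (fun x => (h x : EReal)) ∧ ViscSubsol F D (fun x => (h x : EReal))

/-- `u : Ω → (-∞,∞]` is `F`-superharmonic: lower semicontinuous, not identically `+∞`
on any component, and satisfies comparison with continuous `F`-harmonic functions on
compactly contained open subsets. -/
def IsFSuperharmonic (F : Mat n → ℝ) (Ω : Set (Euc n)) (u : Euc n → EReal) : Prop :=
  LowerSemicontinuousOn u Ω ∧
  (∀ x ∈ Ω, ∃ y ∈ connectedComponentIn Ω x, u y ≠ ⊤) ∧
  (∀ D : Set (Euc n), IsOpen D → closure D ⊆ Ω → IsCompact (closure D) →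
    ∀ h : Euc n → ℝ, ContinuousOn h (closure D) → IsFHarmonicOn F D h →
    (∀ x ∈ frontier D, (h x : EReal) ≤ u x) → ∀ x ∈ D, (h x : EReal) ≤ u x)

/-- `u : Ω → [-∞,∞)` is `F`-subharmonic. -/
def IsFSubharmonic (F : Mat n → ℝ) (Ω : Set (Euc n)) (u : Euc n → EReal) : Prop :=
  UpperSemicontinuousOn u Ω ∧
  (∀ x ∈ Ω, ∃ y ∈ connectedComponentIn Ω x, u y ≠ ⊥) ∧
  (∀ D : Set (Euc n), IsOpen D → closure D ⊆ Ω → IsCompact (closure D) →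
    ∀ h : Euc n → ℝ, ContinuousOn h (closure D) → IsFHarmonicOn F D h →
    (∀ x ∈ frontier D, u x ≤ (h x : EReal)) → ∀ x ∈ D, u x ≤ (h x : EReal))

/-- The upper class of a boundary function `f` on `∂Ω`. -/
def upperClass (F : Mat n → ℝ) (Ω : Set (Euc n)) (f : Euc n → ℝ) : Set (Euc n → EReal) :=
  {u | IsFSuperharmonic F Ω u ∧ (∃ m : ℝ, ∀ x ∈ Ω, (m : EReal) ≤ u x) ∧
    ∀ x ∈ frontier Ω, (f x : EReal) ≤ Filter.liminf u (𝓝[Ω] x)}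

/-- The lower class of a boundary function `f` on `∂Ω`. -/
def lowerClass (F : Mat n → ℝ) (Ω : Set (Euc n)) (f : Euc n → ℝ) : Set (Euc n → EReal) :=
  {u | IsFSubharmonic F Ω u ∧ (∃ m : ℝ, ∀ x ∈ Ω, u x ≤ (m : EReal)) ∧
    ∀ x ∈ frontier Ω, Filter.limsup u (𝓝[Ω] x) ≤ (f x : EReal)}

/-- The upper Perron solution. -/
def upperPerron (F : Mat n → ℝ) (Ω : Set (Euc n)) (f : Euc n → ℝ) : Euc n → EReal :=
  fun x => ⨅ u ∈ upperClass F Ω f, u x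

/-- The lower Perron solution. -/
def lowerPerron (F : Mat n → ℝ) (Ω : Set (Euc n)) (f : Euc n → ℝ) : Euc n → EReal :=
  fun x => ⨆ u ∈ lowerClass F Ω f, u x

/-- `x₀ ∈ ∂Ω` is a regular boundary point. -/
def RegularPoint (F : Mat n → ℝ) (Ω : Set (Euc n)) (x₀ : Euc n) : Prop :=
  ∀ f : Euc n → ℝ, ContinuousOn f (frontier Ω) →
    Tendsto (upperPerron F Ω f) (𝓝[Ω] x₀) (𝓝 ((f x₀ : EReal))) ∧
    Tendsto (lowerPerron F Ω f) (𝓝[Ω] x₀) (𝓝 ((f x₀ : EReal)))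

/-- An upper barrier at `x₀ ∈ ∂Ω`. -/
def IsUpperBarrier (F : Mat n → ℝ) (Ω : Set (Euc n)) (x₀ : Euc n) (w : Euc n → ℝ) : Prop :=
  IsFSuperharmonic F Ω (fun x => (w x : EReal)) ∧
  (∀ x ∈ frontier Ω, x ≠ x₀ → 0 < Filter.liminf (fun y => (w y : EReal)) (𝓝[Ω] x)) ∧
  Tendsto w (𝓝[Ω] x₀) (𝓝 0)

/-- A lower barrier at `x₀ ∈ ∂Ω`. -/
def IsLowerBarrier (F : Mat n → ℝ) (Ω : Set (Euc n)) (x₀ : Euc n) (w : Euc n → ℝ) : Prop :=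
  IsFSubharmonic F Ω (fun x => (w x : EReal)) ∧
  (∀ x ∈ frontier Ω, x ≠ x₀ → Filter.limsup (fun y => (w y : EReal)) (𝓝[Ω] x) < 0) ∧
  Tendsto w (𝓝[Ω] x₀) (𝓝 0)

/-- The admissible class for the reduced function of the constant `1` on `K` in `B`. -/
def PhiSet (F : Mat n → ℝ) (B K : Set (Euc n)) : Set (Euc n → EReal) :=
  {u | IsFSuperharmonic F B u ∧ (∀ x ∈ B, 0 ≤ u x) ∧ ∀ x ∈ K, 1 ≤ u x}

/-- The reduced function `R¹_K(B)`. -/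
def reducedFn (F : Mat n → ℝ) (B K : Set (Euc n)) : Euc n → EReal :=
  fun x => ⨅ u ∈ PhiSet F B K, u x

/-- Lower semicontinuous regularization of `w` relative to `Ω`. -/
def lscRegOn (Ω : Set (Euc n)) (w : Euc n → EReal) : Euc n → EReal :=
  fun x => ⨆ r : {r : ℝ // 0 < r}, ⨅ y ∈ Ω ∩ ball x (r : ℝ), w y

/-- The balayage (capacity potential) `R̂¹_K(B)`. -/
def balayage (F : Mat n → ℝ) (B K : Set (Euc n)) : Euc n → EReal :=
  lscRegOn B (reducedFn F B K)

/-- The non-variational capacity `cap_F(K, B_{2r}(x₀)) = R̂¹_K(B_{2r}(x₀))(y₀)`,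
where `y₀ = x₀ + (3r/2)e₁`. -/
def capF [NeZero n] (F : Mat n → ℝ) (x₀ : Euc n) (r : ℝ) (K : Set (Euc n)) : EReal :=
  balayage F (ball x₀ (2 * r)) K (x₀ + EuclideanSpace.single (0 : Fin n) (3 * r / 2))


/-- Restriction of an `F`-harmonic function to an open subset, shifted by a constant,
is still `F`-harmonic. -/
lemma isFHarmonicOn_shift_of_subset {n : ℕ} (F : Mat n → ℝ) {G W : Set (Euc n)}
    (hWo : IsOpen W) (hWG : W ⊆ G) (h : Euc n → ℝ) (c : ℝ)
    (hh : IsFHarmonicOn F G h) : IsFHarmonicOn F W (fun y => h y - c) := by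
  have key : ∀ x₀ ∈ W, ∀ (P : Euc n → Prop), (∀ᶠ y in 𝓝[W] x₀, P y) →
      ∀ᶠ y in 𝓝[G] x₀, P y := by
    intro x₀ hx₀ P hP
    rw [nhdsWithin_eq_nhds.2 (hWo.mem_nhds hx₀)] at hP
    exact hP.filter_mono nhdsWithin_le_nhds
  constructor
  · intro x₀ hx₀ φ hφ hev
    refine hh.1 x₀ (hWG hx₀) φ hφ (key x₀ hx₀ _ (hev.mono fun y hy => ?_))
    rw [show ((h x₀ - c : ℝ) : EReal) - (φ x₀ : EReal) = ((h x₀ - c - φ x₀ : ℝ) : EReal)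
        by push_cast; ring, show ((h y - c : ℝ) : EReal) - (φ y : EReal)
        = ((h y - c - φ y : ℝ) : EReal) by push_cast; ring, EReal.coe_le_coe_iff] at hy
    rw [show ((h x₀ : ℝ) : EReal) - (φ x₀ : EReal) = ((h x₀ - φ x₀ : ℝ) : EReal)
        by push_cast; ring, show ((h y : ℝ) : EReal) - (φ y : EReal)
        = ((h y - φ y : ℝ) : EReal) by push_cast; ring, EReal.coe_le_coe_iff]
    linarith
  · intro x₀ hx₀ φ hφ hev
    refine hh.2 x₀ (hWG hx₀) φ hφ (key x₀ hx₀ _ (hev.mono fun y hy => ?_))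
    rw [show ((h x₀ - c : ℝ) : EReal) - (φ x₀ : EReal) = ((h x₀ - c - φ x₀ : ℝ) : EReal)
        by push_cast; ring, show ((h y - c : ℝ) : EReal) - (φ y : EReal)
        = ((h y - c - φ y : ℝ) : EReal) by push_cast; ring, EReal.coe_le_coe_iff] at hy
    rw [show ((h x₀ : ℝ) : EReal) - (φ x₀ : EReal) = ((h x₀ - φ x₀ : ℝ) : EReal)
        by push_cast; ring, show ((h y : ℝ) : EReal) - (φ y : EReal)
        = ((h y - φ y : ℝ) : EReal) by push_cast; ring, EReal.coe_le_coe_iff]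
    linarith

/-- pasting lemma. The comparison principle for `F`-super/subharmonic
functions (Theorem 2.9 of the paper) is assumed as a hypothesis. -/
theorem stmt_4 {n : ℕ} (F : Mat n → ℝ)
    (hcomp : ∀ O : Set (Euc n), IsOpen O → Bornology.IsBounded O →
      ∀ U V : Euc n → EReal, IsFSuperharmonic F O U → IsFSubharmonic F O V →
        (∀ x ∈ frontier O, Filter.limsup V (𝓝[O] x) ≤ Filter.liminf U (𝓝[O] x)) →
        ∀ x ∈ O, V x ≤ U x)
    (Ω D : Set (Euc n)) (hΩ : IsOpen Ω) (hD : IsOpen D) (hDΩ : D ⊆ Ω)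
    (u v : Euc n → EReal) (hu : IsFSuperharmonic F Ω u) (hv : IsFSuperharmonic F D v)
    (s : Euc n → EReal) (hsD : ∀ x ∈ D, s x = min (u x) (v x))
    (hsc : ∀ x ∈ Ω \ D, s x = u x)
    (hlsc : LowerSemicontinuousOn s Ω) :
    IsFSuperharmonic F Ω s := by
  obtain ⟨hulsc, hune, hucomp⟩ := hu
  obtain ⟨hvlsc, hvne, hvcomp⟩ := hv
  have hsu : ∀ x ∈ Ω, s x ≤ u x := by
    intro x hx
    by_cases hxD : x ∈ D
    · rw [hsD x hxD]; exact min_le_left _ _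
    · rw [hsc x ⟨hx, hxD⟩]
  refine ⟨hlsc, ?_, ?_⟩
  · intro x hx
    obtain ⟨y, hyC, hyne⟩ := hune x hx
    refine ⟨y, hyC, fun hys => hyne ?_⟩
    have hyΩ : y ∈ Ω := connectedComponentIn_subset Ω x hyC
    exact top_le_iff.mp (hys ▸ hsu y hyΩ)
  · intro G hGo hGcl hGc h hcont hh hbd
    have hGsub : G ⊆ Ω := subset_closure.trans hGcl
    have hhu : ∀ x ∈ G, (h x : EReal) ≤ u x := by
      apply hucomp G hGo hGcl hGc h hcont hh
      intro x hx
      exact (hbd x hx).trans (hsu x (hGcl hx.1))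
    have hkey : ∀ ε : ℝ, 0 < ε → ∀ x ∈ G ∩ D, ((h x - ε : ℝ) : EReal) ≤ v x := by
      intro ε hε
      set B : Set (Euc n) := {x | x ∈ G ∩ D ∧ v x ≤ ((h x - ε : ℝ) : EReal)} with hBdef
      have hBGD : B ⊆ G ∩ D := fun x hx => hx.1
      have hBG : B ⊆ G := hBGD.trans inter_subset_left
      have hclB : closure B ⊆ G ∩ D := by
        intro x hxB
        have hxclG : x ∈ closure G := closure_mono hBG hxB
        have hxΩ : x ∈ Ω := hGcl hxclG
        have hnb : (𝓝[B] x).NeBot := mem_closure_iff_nhdsWithin_neBot.mp hxB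
        have hcx : ∀ᶠ y in 𝓝[B] x, h y < h x + ε / 2 := by
          have h2 : ∀ᶠ y in 𝓝[closure G] x, h y < h x + ε / 2 :=
            (hcont x hxclG).eventually_lt_const (by linarith)
          exact h2.filter_mono (nhdsWithin_mono x (hBG.trans subset_closure))
        by_contra hxGD
        by_cases hxD : x ∈ D
        · have hxG : x ∉ G := fun h' => hxGD ⟨h', hxD⟩
          have hxfr : x ∈ frontier G := by
            rw [hGo.frontier_eq]; exact ⟨hxclG, hxG⟩
          have hhx : (h x : EReal) ≤ v x := by
            have h1 := hbd x hxfr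
            rw [hsD x hxD] at h1
            exact h1.trans (min_le_right _ _)
          have hlv : ∀ᶠ y in 𝓝[B] x, ((h x - ε / 2 : ℝ) : EReal) < v y := by
            have h3 : ((h x - ε / 2 : ℝ) : EReal) < v x :=
              lt_of_lt_of_le (EReal.coe_lt_coe_iff.mpr (by linarith)) hhx
            exact (hvlsc x hxD _ h3).filter_mono
              (nhdsWithin_mono x (hBGD.trans inter_subset_right))
          obtain ⟨y, hy1, hy2, hy3⟩ := (hlv.and (hcx.and eventually_mem_nhdsWithin)).exists
          have h4 : v y ≤ ((h x - ε / 2 : ℝ) : EReal) :=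
            hy3.2.trans (EReal.coe_le_coe_iff.mpr (by linarith))
          exact absurd (hy1.trans_le h4) (lt_irrefl _)
        · have hsx : s x = u x := hsc x ⟨hxΩ, hxD⟩
          have hhx : (h x : EReal) ≤ s x := by
            rw [hsx]
            by_cases hxG : x ∈ G
            · exact hhu x hxG
            · have hxfr : x ∈ frontier G := by
                rw [hGo.frontier_eq]; exact ⟨hxclG, hxG⟩
              have h1 := hbd x hxfr; rw [hsx] at h1; exact h1
          have hls : ∀ᶠ y in 𝓝[B] x, ((h x - ε / 2 : ℝ) : EReal) < s y := by
            have h3 : ((h x - ε / 2 : ℝ) : EReal) < s x :=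
              lt_of_lt_of_le (EReal.coe_lt_coe_iff.mpr (by linarith)) hhx
            exact (hlsc x hxΩ _ h3).filter_mono
              (nhdsWithin_mono x (hBG.trans hGsub))
          obtain ⟨y, hy1, hy2, hy3⟩ := (hls.and (hcx.and eventually_mem_nhdsWithin)).exists
          have hyD : y ∈ D := hy3.1.2
          have h4 : s y ≤ ((h x - ε / 2 : ℝ) : EReal) := by
            rw [hsD y hyD]
            exact (min_le_right _ _).trans (hy3.2.trans (EReal.coe_le_coe_iff.mpr (by linarith)))
          exact absurd (hy1.trans_le h4) (lt_irrefl _)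
      have hBcomp : IsCompact (closure B) :=
        hGc.of_isClosed_subset isClosed_closure (closure_mono hBG)
      obtain ⟨W, hWo, hBW, hWsub, hWc⟩ :=
        exists_open_between_and_isCompact_closure hBcomp (hGo.inter hD) hclB
      have hWG : W ⊆ G := (subset_closure.trans hWsub).trans inter_subset_left
      have hWD : closure W ⊆ D := hWsub.trans inter_subset_right
      have hcont' : ContinuousOn (fun y => h y - ε) (closure W) :=
        (hcont.mono ((hWsub.trans inter_subset_left).trans subset_closure)).sub continuousOn_const
      have hharm : IsFHarmonicOn F W (fun y => h y - ε) :=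
        isFHarmonicOn_shift_of_subset F hWo hWG h ε hh
      have hWv : ∀ x ∈ W, ((h x - ε : ℝ) : EReal) ≤ v x := by
        apply hvcomp W hWo hWD hWc _ hcont' hharm
        intro x hx
        have hxGD : x ∈ G ∩ D := hWsub hx.1
        have hxW : x ∉ W := by rw [hWo.frontier_eq] at hx; exact hx.2
        have hxB : x ∉ B := fun hb => hxW (hBW (subset_closure hb))
        exact (not_le.mp fun hcon => hxB ⟨hxGD, hcon⟩).le
      intro x hx
      by_cases hxB : x ∈ B
      · exact hWv x (hBW (subset_closure hxB))
      · exact (not_le.mp fun hcon => hxB ⟨hx, hcon⟩).le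
    have hhv : ∀ x ∈ G ∩ D, (h x : EReal) ≤ v x := by
      intro x hx
      by_contra hcon
      push_neg at hcon
      obtain ⟨c, hc1, hc2⟩ := EReal.exists_between_coe_real hcon
      have hclt : c < h x := EReal.coe_lt_coe_iff.mp hc2
      have h5 := hkey (h x - c) (by linarith) x hx
      rw [sub_sub_cancel] at h5
      exact absurd hc1 (not_lt.mpr h5)
    intro x hxG
    by_cases hxD : x ∈ D
    · rw [hsD x hxD]; exact le_min (hhu x hxG) (hhv x ⟨hxG, hxD⟩)
    · rw [hsc x ⟨hGsub hxG, hxD⟩]; exact hhu x hxG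
end
end

section
/- If ℱ is a family of F-superharmonic functions in Ω that is locally uniformly bounded below, then the lower semicontinuous regularization s(x) = lim_{r→0} inf_{B_r(x)} (inf ℱ) is F-superharmonic in Ω. -/
open Filter Topology Metric Set MeasureTheory Matrix

noncomputable section

variable {n : ℕ}

/-- the lower semicontinuous regularization of the infimum of a
(nonempty) family of `F`-superharmonic functions that is locally uniformly bounded
below is `F`-superharmonic. -/
theorem stmt_5 {n : ℕ} (F : Mat n → ℝ) (Ω : Set (Euc n)) (hΩ : IsOpen Ω)
    (ℱ : Set (Euc n → EReal)) (hne : ℱ.Nonempty)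
    (hsh : ∀ u ∈ ℱ, IsFSuperharmonic F Ω u)
    (hbdd : ∀ x ∈ Ω, ∃ r > (0 : ℝ), ∃ m : ℝ, ∀ u ∈ ℱ, ∀ y ∈ Ω ∩ ball x r, (m : EReal) ≤ u y) :
    IsFSuperharmonic F Ω (lscRegOn Ω (fun x => ⨅ u ∈ ℱ, u x)) := by
  classical
  set w : Euc n → EReal := fun x => ⨅ u ∈ ℱ, u x with hw
  set s : Euc n → EReal := lscRegOn Ω w with hs
  -- s ≤ w on Ω
  have hsw : ∀ x ∈ Ω, s x ≤ w x := by
    intro x hx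
    refine iSup_le fun r => ?_
    exact biInf_le w ⟨hx, mem_ball_self r.2⟩
  -- w ≤ u for each u ∈ ℱ
  have hwu : ∀ u ∈ ℱ, ∀ x, w x ≤ u x := fun u hu x => biInf_le (fun u => u x) hu
  -- s is lower semicontinuous (everywhere)
  have hlsc : LowerSemicontinuous s := by
    intro x c hc
    rw [show s x = ⨆ r : {r : ℝ // 0 < r}, ⨅ y ∈ Ω ∩ ball x (r : ℝ), w y from rfl,
      gt_iff_lt, lt_iSup_iff] at hc
    obtain ⟨⟨r, hr⟩, hlt⟩ := hc
    filter_upwards [ball_mem_nhds x (half_pos hr)] with y hy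
    have h1 : (⨅ z ∈ Ω ∩ ball x r, w z) ≤ ⨅ z ∈ Ω ∩ ball y (r / 2), w z := by
      refine biInf_mono fun z hz => ?_
      refine ⟨hz.1, ?_⟩
      have : dist z x ≤ dist z y + dist y x := dist_triangle z y x
      have hzy : dist z y < r / 2 := hz.2
      have hyx : dist y x < r / 2 := hy
      exact mem_ball.2 (by linarith)
    have h2 : (⨅ z ∈ Ω ∩ ball y (r / 2), w z) ≤ s y :=
      le_iSup (fun t : {t : ℝ // 0 < t} => ⨅ z ∈ Ω ∩ ball y (t : ℝ), w z)
        ⟨r / 2, half_pos hr⟩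
    exact hlt.trans_le (h1.trans h2)
  refine ⟨hlsc.lowerSemicontinuousOn Ω, ?_, ?_⟩
  · -- not identically ⊤
    intro x hx
    obtain ⟨u0, hu0⟩ := hne
    obtain ⟨y, hy, hyne⟩ := (hsh u0 hu0).2.1 x hx
    refine ⟨y, hy, fun htop => hyne ?_⟩
    have hyΩ : y ∈ Ω := connectedComponentIn_subset Ω x hy
    have : (⊤ : EReal) ≤ u0 y := htop ▸ (hsw y hyΩ).trans (hwu u0 hu0 y)
    exact top_le_iff.mp this
  · -- comparison
    intro D hD hDΩ hDc h hcont hharm hbd x hx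
    have hfr : ∀ z ∈ frontier D, z ∈ Ω := fun z hz => hDΩ (frontier_subset_closure hz)
    have hhw : ∀ z ∈ D, (h z : EReal) ≤ w z := by
      intro z hz
      refine le_iInf₂ fun u hu => ?_
      refine (hsh u hu).2.2 D hD hDΩ hDc h hcont hharm ?_ z hz
      intro y hy
      exact (hbd y hy).trans ((hsw y (hfr y hy)).trans (hwu u hu y))
    -- now show h x ≤ s x using continuity of h at x
    by_contra hlt
    push_neg at hlt
    obtain ⟨c, hc1, hc2⟩ := EReal.exists_between_coe_real hlt
    have hch : c < h x := by exact_mod_cast hc2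
    have hxnhds : closure D ∈ 𝓝 x := mem_of_superset (hD.mem_nhds hx) subset_closure
    have hcx : ContinuousAt h x := hcont.continuousAt hxnhds
    have hev : {y | c < h y} ∩ D ∈ 𝓝 x :=
      Filter.inter_mem (hcx.eventually (eventually_gt_nhds hch)) (hD.mem_nhds hx)
    obtain ⟨r, hr, hball⟩ := Metric.mem_nhds_iff.mp hev
    have hle : (c : EReal) ≤ ⨅ y ∈ Ω ∩ ball x r, w y := by
      refine le_iInf₂ fun y hy => ?_
      have hyD : y ∈ {y | c < h y} ∩ D := hball hy.2
      have : (c : EReal) ≤ (h y : EReal) := by exact_mod_cast (hyD.1).le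
      exact this.trans (hhw y hyD.2)
    have : (c : EReal) ≤ s x :=
      hle.trans (le_iSup (fun t : {t : ℝ // 0 < t} => ⨅ y ∈ Ω ∩ ball x (t : ℝ), w y) ⟨r, hr⟩)
    exact absurd (hc1.trans_le this) (lt_irrefl _)
end
end

section
/- If u is a bounded F-superharmonic function on a bounded open set Ω such that f(x) := lim_{Ω∋y→x} u(y) exists for every x ∈ ∂Ω, then f is a resolutive boundary function, i.e. the upper and lower Perron solutions of f coincide. -/
open Filter Topology Metric Set MeasureTheory Matrix

noncomputable section

variable {n : ℕ}

/-- if `u` is a bounded `F`-superharmonic function on a bounded open `Ω`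
whose boundary limits `f(x) = lim_{Ω ∋ y → x} u(y)` exist at every `x ∈ ∂Ω`, then `f`
is resolutive. (That `H̄_f` is `F`-harmonic and `H̲_f ≤ H̄_f` may be assumed.) -/
theorem stmt_8 {n : ℕ} (F : Mat n → ℝ) (Ω : Set (Euc n)) (hΩ : IsOpen Ω)
    (hΩb : Bornology.IsBounded Ω) (u : Euc n → EReal)
    (hu : IsFSuperharmonic F Ω u)
    (hubdd : ∃ m M : ℝ, ∀ x ∈ Ω, (m : EReal) ≤ u x ∧ u x ≤ (M : EReal))
    (f : Euc n → ℝ)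
    (hf : ∀ x ∈ frontier Ω, Tendsto u (𝓝[Ω] x) (𝓝 ((f x : EReal))))
    (hharm : IsFSubharmonic F Ω (upperPerron F Ω f) ∧
      IsFSuperharmonic F Ω (upperPerron F Ω f))
    (hcomp : ∀ x ∈ Ω, lowerPerron F Ω f x ≤ upperPerron F Ω f x) :
    ∀ x ∈ Ω, upperPerron F Ω f x = lowerPerron F Ω f x := by
  obtain ⟨m, M, hmM⟩ := hubdd
  -- `u` belongs to the upper class of `f`.
  have huUC : u ∈ upperClass F Ω f := by
    refine ⟨hu, ⟨m, fun x hx => (hmM x hx).1⟩, fun x hx => ?_⟩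
    by_cases hne : (𝓝[Ω] x).NeBot
    · rw [(hf x hx).liminf_eq]
    · rw [not_neBot] at hne
      simp [hne, Filter.liminf_eq]
  -- hence the upper Perron solution is bounded above by `u`, so by `M`.
  have hle : ∀ y ∈ Ω, upperPerron F Ω f y ≤ u y := by
    intro y hy
    exact biInf_le (f := fun v => v y) huUC
  -- The upper Perron solution belongs to the lower class of `f`.
  have hLC : upperPerron F Ω f ∈ lowerClass F Ω f := by
    refine ⟨hharm.1, ⟨M, fun y hy => (hle y hy).trans (hmM y hy).2⟩, fun x hx => ?_⟩
    have hev : ∀ᶠ y in 𝓝[Ω] x, upperPerron F Ω f y ≤ u y :=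
      eventually_nhdsWithin_of_forall hle
    calc Filter.limsup (upperPerron F Ω f) (𝓝[Ω] x) ≤ Filter.limsup u (𝓝[Ω] x) :=
          Filter.limsup_le_limsup hev
      _ ≤ (f x : EReal) := by
          by_cases hne : (𝓝[Ω] x).NeBot
          · rw [(hf x hx).limsup_eq]
          · rw [not_neBot] at hne
            simp [hne, Filter.limsup_eq]
  intro x hx
  refine le_antisymm ?_ (hcomp x hx)
  exact le_biSup (f := fun v => v x) hLC
end
end
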